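/- Let T₁ ∈ ℝ, C > 0 and α ∈ (0,1]. Let y : [T₁, ∞) → ℝ be continuous with y(t) ≥ 0 for all t ≥ T₁, and suppose that at every point t ≥ T₁ with y(t) > 0, y is differentiable at t with y'(t) ≤ -C·y(t)^{1-α}. Then y(t) = 0 for every t ≥ T₁ + y(T₁)^α / (C·α). In particular there exists a finite time T₀ such that y vanishes identically on [T₀, ∞). -/
import Mathlib

open Set Filter Topology

/-- Key linear-comparison lemma: a continuous nonnegative function `z` on `[a, ∞)`
with `z' ≤ -k` wherever `z > 0` vanishes from time `a + z a / k` on. -/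
private lemma key_lemma (a k : ℝ) (hk : 0 < k) (z : ℝ → ℝ)
    (hc : ContinuousOn z (Ici a))
    (hnn : ∀ t, a ≤ t → 0 ≤ z t)
    (hd : ∀ t, a ≤ t → 0 < z t → ∃ d, HasDerivAt z d t ∧ d ≤ -k) :
    ∀ t, a + z a / k ≤ t → z t = 0 := by
  have hsub : ∀ s t : ℝ, a ≤ s → s ≤ t → (∀ u ∈ Icc s t, 0 < z u) →
      z t + k * t ≤ z s + k * s := by
    intro s t has hst hpos
    have hIcc : Icc s t ⊆ Ici a := fun u hu => le_trans has hu.1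
    have hanti : AntitoneOn (fun u => z u + k * u) (Icc s t) := by
      apply antitoneOn_of_deriv_nonpos (convex_Icc s t)
      · exact (hc.mono hIcc).add ((continuous_const.mul continuous_id).continuousOn)
      · intro x hx
        rw [interior_Icc] at hx
        obtain ⟨d, hdz, _⟩ := hd x (le_trans has (le_of_lt hx.1))
          (hpos x ⟨le_of_lt hx.1, le_of_lt hx.2⟩)
        exact (hdz.add ((hasDerivAt_id x).const_mul k)).differentiableAt.differentiableWithinAt
      · intro x hx
        rw [interior_Icc] at hx
        obtain ⟨d, hdz, hdle⟩ := hd x (le_trans has (le_of_lt hx.1))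
          (hpos x ⟨le_of_lt hx.1, le_of_lt hx.2⟩)
        have : HasDerivAt (fun u => z u + k * u) (d + k * 1) x :=
          hdz.add ((hasDerivAt_id x).const_mul k)
        rw [this.deriv]
        linarith
    have := hanti (left_mem_Icc.mpr hst) (right_mem_Icc.mpr hst) hst
    simpa using this
  intro t ht
  have hza : 0 ≤ z a := hnn a le_rfl
  have hdiv : 0 ≤ z a / k := div_nonneg hza (le_of_lt hk)
  have hat : a ≤ t := le_trans (by linarith) ht
  by_contra h0
  have hzt : 0 < z t := lt_of_le_of_ne (hnn t hat) (Ne.symm h0)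
  set E : Set ℝ := Icc a t ∩ z ⁻¹' {0} with hE
  have hEclosed : IsClosed E :=
    (hc.mono (Icc_subset_Ici_self)).preimage_isClosed_of_isClosed isClosed_Icc
      isClosed_singleton
  rcases eq_empty_or_nonempty E with hEe | hEne
  · -- z > 0 throughout [a, t]
    have hpos : ∀ u ∈ Icc a t, 0 < z u := by
      intro u hu
      rcases lt_or_eq_of_le (hnn u hu.1) with h | h
      · exact h
      · exact absurd (by exact ⟨hu, h.symm⟩ : u ∈ E) (by simp [hEe])
    have := hsub a t le_rfl hat hpos
    have hk' : z a ≤ k * (t - a) := by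
      have : z a / k ≤ t - a := by linarith
      calc z a = (z a / k) * k := by field_simp
        _ ≤ (t - a) * k := mul_le_mul_of_nonneg_right this (le_of_lt hk)
        _ = k * (t - a) := by ring
    linarith
  · set s₀ := sSup E with hs₀
    have hEcomp : IsCompact E :=
      (isCompact_Icc).of_isClosed_subset hEclosed inter_subset_left
    have hs₀mem : s₀ ∈ E := hEcomp.sSup_mem hEne
    obtain ⟨⟨has₀, hs₀t⟩, hzs₀⟩ := hs₀mem
    have hzs₀0 : z s₀ = 0 := hzs₀
    have hs₀lt : s₀ < t := lt_of_le_of_ne hs₀t (by intro h; rw [h] at hzs₀0; linarith)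
    have hposIoc : ∀ u ∈ Ioc s₀ t, 0 < z u := by
      intro u hu
      have hau : a ≤ u := le_trans has₀ (le_of_lt hu.1)
      rcases lt_or_eq_of_le (hnn u hau) with h | h
      · exact h
      · have : u ∈ E := ⟨⟨hau, hu.2⟩, h.symm⟩
        have : u ≤ s₀ := le_csSup hEcomp.bddAbove this
        linarith [hu.1]
    have hev : ∀ s ∈ Ioc s₀ t, z t + k * t ≤ z s + k * s := by
      intro s hs
      exact hsub s t (le_trans has₀ (le_of_lt hs.1)) hs.2
        (fun u hu => hposIoc u ⟨lt_of_lt_of_le hs.1 hu.1, hu.2⟩)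
    have htend : Tendsto (fun s => z s + k * s) (𝓝[Ioc s₀ t] s₀) (𝓝 (z s₀ + k * s₀)) := by
      have h1 : ContinuousWithinAt z (Ioc s₀ t) s₀ :=
        (hc s₀ has₀).mono (fun u hu => le_trans has₀ (le_of_lt hu.1))
      exact (h1.add ((continuous_const.mul continuous_id).continuousWithinAt)).tendsto
    have hne : (𝓝[Ioc s₀ t] s₀).NeBot := by
      apply mem_closure_iff_nhdsWithin_neBot.mp
      rw [closure_Ioc (ne_of_lt hs₀lt)]
      exact ⟨le_rfl, le_of_lt hs₀lt⟩
    have hle : z t + k * t ≤ z s₀ + k * s₀ :=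
      ge_of_tendsto htend (eventually_nhdsWithin_of_forall hev)
    rw [hzs₀0] at hle
    nlinarith

/-- The differential-inequality argument of Theorem 3.2: a continuous non-negative
function `y` on `[T₁, ∞)` satisfying `y' ≤ -C * y ^ (1 - α)` wherever it is positive
vanishes identically from the time `T₁ + y T₁ ^ α / (C * α)` on; in particular it
vanishes identically after some finite time `T₀`. -/
theorem stmt_9 (T₁ C α : ℝ) (hC : 0 < C) (hα : α ∈ Set.Ioc (0 : ℝ) 1)
    (y : ℝ → ℝ) (hycont : ContinuousOn y (Set.Ici T₁))
    (hynonneg : ∀ t : ℝ, T₁ ≤ t → 0 ≤ y t)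
    (hyderiv : ∀ t : ℝ, T₁ ≤ t → 0 < y t →
      ∃ d : ℝ, HasDerivAt y d t ∧ d ≤ -C * y t ^ (1 - α)) :
    (∀ t : ℝ, T₁ + y T₁ ^ α / (C * α) ≤ t → y t = 0) ∧
      ∃ T₀ : ℝ, ∀ t : ℝ, T₀ ≤ t → y t = 0 := by
  obtain ⟨hα0, hα1⟩ := hα
  set z : ℝ → ℝ := fun s => y s ^ α with hz
  have hk : 0 < C * α := mul_pos hC hα0
  have hzc : ContinuousOn z (Ici T₁) :=
    hycont.rpow_const (fun x _ => Or.inr (le_of_lt hα0))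
  have hznn : ∀ t, T₁ ≤ t → 0 ≤ z t := fun t ht => Real.rpow_nonneg (hynonneg t ht) α
  have hypos : ∀ t, T₁ ≤ t → 0 < z t → 0 < y t := by
    intro t ht hzt
    rcases lt_or_eq_of_le (hynonneg t ht) with h | h
    · exact h
    · exfalso
      have : z t = 0 := by
        simp only [hz, ← h, Real.zero_rpow (ne_of_gt hα0)]
      linarith
  have hzd : ∀ t, T₁ ≤ t → 0 < z t → ∃ d, HasDerivAt z d t ∧ d ≤ -(C * α) := by
    intro t ht hzt
    have hyt : 0 < y t := hypos t ht hzt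
    obtain ⟨d, hdy, hdle⟩ := hyderiv t ht hyt
    refine ⟨d * α * y t ^ (α - 1), hdy.rpow_const (Or.inl (ne_of_gt hyt)), ?_⟩
    have hp : 0 < y t ^ (α - 1) := Real.rpow_pos_of_pos hyt _
    have h1 : y t ^ (1 - α) * y t ^ (α - 1) = 1 := by
      rw [← Real.rpow_add hyt]
      norm_num
    have : d * α * y t ^ (α - 1) ≤ (-C * y t ^ (1 - α)) * α * y t ^ (α - 1) := by
      have hαp : 0 < α * y t ^ (α - 1) := mul_pos hα0 hp
      calc d * α * y t ^ (α - 1) = d * (α * y t ^ (α - 1)) := by ring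
        _ ≤ (-C * y t ^ (1 - α)) * (α * y t ^ (α - 1)) :=
            mul_le_mul_of_nonneg_right hdle (le_of_lt hαp)
        _ = (-C * y t ^ (1 - α)) * α * y t ^ (α - 1) := by ring
    calc d * α * y t ^ (α - 1) ≤ (-C * y t ^ (1 - α)) * α * y t ^ (α - 1) := this
      _ = -(C * α) * (y t ^ (1 - α) * y t ^ (α - 1)) := by ring
      _ = -(C * α) := by rw [h1]; ring
  have hkey := key_lemma T₁ (C * α) hk z hzc hznn hzd
  have hmain : ∀ t : ℝ, T₁ + y T₁ ^ α / (C * α) ≤ t → y t = 0 := by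
    intro t ht
    have hz0 : z t = 0 := hkey t ht
    have hat : T₁ ≤ t := by
      have : 0 ≤ y T₁ ^ α / (C * α) :=
        div_nonneg (Real.rpow_nonneg (hynonneg T₁ le_rfl) α) (le_of_lt hk)
      linarith
    by_contra h
    have hyt : 0 < y t := lt_of_le_of_ne (hynonneg t hat) (Ne.symm h)
    have : 0 < z t := Real.rpow_pos_of_pos hyt α
    linarith
  exact ⟨hmain, ⟨T₁ + y T₁ ^ α / (C * α), hmain⟩⟩
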